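/- (Exact λ-th moment of the multivariate Gaussian mechanism.) Let p ≥ 1, v, v' ∈ ℝ^p, and σ > 0. Let μ be the law of v + Z and ν the law of v' + Z, where Z has p independent coordinates each distributed N(0, σ²) (i.e., μ and ν are p-fold products of one-dimensional Gaussians translated by v and v'). Then μ ≪ ν and for every real λ > 0, ∫ (dμ/dν)^λ dμ = exp( λ(λ+1)·‖v − v'‖₂² / (2σ²) ). -/

import Mathlib

open MeasureTheory ProbabilityTheory Real
open scoped ENNReal NNReal

theorem lintegral_pi_prod {n : ℕ} (μ : Fin n → Measure ℝ) (hsf : ∀ i, SigmaFinite (μ i))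
    (f : Fin n → ℝ → ℝ≥0∞) (hf : ∀ i, Measurable (f i)) :
    ∫⁻ x, ∏ i, f i (x i) ∂Measure.pi μ = ∏ i, ∫⁻ t, f i t ∂(μ i) := by
  induction n with
  | zero =>
    simp [lintegral_const]
  | succ n ih =>
    have := fun i => hsf i
    have hmp := measurePreserving_piFinSuccAbove μ 0
    have hg : Measurable fun z : ℝ × (Fin n → ℝ) => f 0 z.1 * ∏ j, f (Fin.succ j) (z.2 j) :=
      ((hf 0).comp measurable_fst).mul <|
        Finset.measurable_prod _ fun j _ =>
          (hf _).comp ((measurable_pi_apply j).comp measurable_snd)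
    have h1 := hmp.lintegral_comp hg
    have h2 : ∀ x : Fin (n+1) → ℝ,
        (fun z : ℝ × (Fin n → ℝ) => f 0 z.1 * ∏ j, f (Fin.succ j) (z.2 j))
          (MeasurableEquiv.piFinSuccAbove (fun _ => ℝ) 0 x)
        = ∏ i, f i (x i) := by
      intro x
      rw [Fin.prod_univ_succ]
      simp [MeasurableEquiv.piFinSuccAbove, Fin.tail]
    calc ∫⁻ x, ∏ i, f i (x i) ∂Measure.pi μ
        = ∫⁻ z, f 0 z.1 * ∏ j, f (Fin.succ j) (z.2 j)
            ∂((μ 0).prod (Measure.pi fun j => μ ((0 : Fin (n+1)).succAbove j))) := by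
          rw [← h1]; exact lintegral_congr fun x => (h2 x).symm
      _ = (∫⁻ t, f 0 t ∂μ 0) *
            ∫⁻ y, ∏ j, f (Fin.succ j) (y j) ∂Measure.pi (fun j => μ ((0 : Fin (n+1)).succAbove j)) :=
          lintegral_prod_mul ((hf 0).aemeasurable)
            ((Finset.measurable_prod _ fun j _ => (hf _).comp (measurable_pi_apply j)).aemeasurable)
      _ = (∫⁻ t, f 0 t ∂μ 0) * ∏ j, ∫⁻ t, f (Fin.succ j) t ∂μ (Fin.succ j) := by
          congr 1
          simp only [Fin.succAbove_zero]
          exact ih _ (fun j => hsf _) _ (fun j => hf _)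
      _ = ∏ i, ∫⁻ t, f i t ∂μ i := (Fin.prod_univ_succ fun i => ∫⁻ t, f i t ∂μ i).symm

lemma exp_shuffle (C a b c d : ℝ) (h : a + b = c + d) :
    C * rexp a * rexp b = rexp c * (C * rexp d) := by
  rw [mul_assoc, ← Real.exp_add, h, Real.exp_add]; ring

theorem gauss_moment_one (m m' σ : ℝ) (hσ : 0 < σ) (κ : ℝ) :
    ∫⁻ t, ENNReal.ofReal (rexp (((t - m')^2 - (t - m)^2)/(2*σ^2) * κ))
        ∂gaussianReal m' ((σ^2).toNNReal)
      = ENNReal.ofReal (rexp (κ*(κ-1)*(m - m')^2/(2*σ^2))) := by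
  have hσ2 : (0:ℝ) < σ^2 := by positivity
  have hs2c : (((σ^2).toNNReal : ℝ≥0) : ℝ) = σ^2 := Real.coe_toNNReal _ hσ2.le
  have hs2 : (σ^2).toNNReal ≠ 0 := by
    simp [Real.toNNReal_eq_zero, not_le, hσ2, hσ.ne']
  have hmeas : Measurable fun t : ℝ =>
      ENNReal.ofReal (rexp (((t - m')^2 - (t - m)^2)/(2*σ^2) * κ)) := by
    fun_prop
  rw [gaussianReal_of_var_ne_zero _ hs2,
    lintegral_withDensity_eq_lintegral_mul _ (measurable_gaussianPDF _ _) hmeas]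
  have hpt : ∀ t : ℝ, (gaussianPDF m' (σ^2).toNNReal
        * fun t => ENNReal.ofReal (rexp (((t - m')^2 - (t - m)^2)/(2*σ^2) * κ))) t
      = ENNReal.ofReal (rexp (κ*(κ-1)*(m - m')^2/(2*σ^2)))
        * gaussianPDF (m' + κ*(m - m')) (σ^2).toNNReal t := by
    intro t
    simp only [Pi.mul_apply, gaussianPDF]
    rw [← ENNReal.ofReal_mul (gaussianPDFReal_nonneg _ _ _),
      ← ENNReal.ofReal_mul (Real.exp_pos _).le]
    congr 1
    simp only [gaussianPDFReal, hs2c]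
    exact exp_shuffle _ _ _ _ _ (by field_simp; ring)
  simp_rw [hpt]
  rw [lintegral_const_mul _ (measurable_gaussianPDF _ _), lintegral_gaussianPDF_eq_one _ hs2,
    mul_one]

/-- Exact λ-th moment of the multivariate Gaussian mechanism: for `μ, ν` the `p`-fold
products of one-dimensional Gaussians `N(v i, σ²)` and `N(v' i, σ²)` respectively,
`μ ≪ ν` and `∫ (dμ/dν)^λ dμ = exp(λ(λ+1)‖v - v'‖₂²/(2σ²))` for all `λ > 0`,
where `‖v - v'‖₂² = ∑ i, (v i - v' i)²`. -/
theorem gaussian_pi_moment_eq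
    (p : ℕ) (hp : 1 ≤ p) (v v' : Fin p → ℝ) (σ : ℝ) (hσ : 0 < σ) :
    (Measure.pi fun i => gaussianReal (v i) ((σ ^ 2).toNNReal)) ≪
        (Measure.pi fun i => gaussianReal (v' i) ((σ ^ 2).toNNReal)) ∧
      ∀ lam : ℝ, 0 < lam →
        ∫⁻ x, ((Measure.pi fun i => gaussianReal (v i) ((σ ^ 2).toNNReal)).rnDeriv
            (Measure.pi fun i => gaussianReal (v' i) ((σ ^ 2).toNNReal)) x) ^ lam
          ∂(Measure.pi fun i => gaussianReal (v i) ((σ ^ 2).toNNReal))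
        = ENNReal.ofReal
            (Real.exp (lam * (lam + 1) * (∑ i, (v i - v' i) ^ 2) / (2 * σ ^ 2))) := by
  have hσ2 : (0:ℝ) < σ^2 := by positivity
  have hs2c : (((σ^2).toNNReal : ℝ≥0) : ℝ) = σ^2 := Real.coe_toNNReal _ hσ2.le
  have hs2 : (σ^2).toNNReal ≠ 0 := by
    simp [Real.toNNReal_eq_zero, not_le, hσ2, hσ.ne']
  set g : Fin p → ℝ → ℝ := fun i t => ((t - v' i)^2 - (t - v i)^2)/(2*σ^2) with hg
  set f : Fin p → ℝ → ℝ≥0∞ := fun i t => ENNReal.ofReal (rexp (g i t)) with hf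
  have hfmeas : ∀ i, Measurable (f i) := by intro i; simp only [hf, hg]; fun_prop
  -- one-dimensional withDensity representation
  have hratio : ∀ (i : Fin p) (t : ℝ),
      gaussianPDFReal (v i) ((σ^2).toNNReal) t
        = gaussianPDFReal (v' i) ((σ^2).toNNReal) t * rexp (g i t) := by
    intro i t
    simp only [gaussianPDFReal, hs2c, hg, mul_assoc, ← Real.exp_add]
    congr 1
    rw [Real.exp_eq_exp]
    field_simp
    ring
  have hwd : ∀ i, gaussianReal (v i) ((σ^2).toNNReal)
      = (gaussianReal (v' i) ((σ^2).toNNReal)).withDensity (f i) := by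
    intro i
    rw [gaussianReal_of_var_ne_zero _ hs2, gaussianReal_of_var_ne_zero _ hs2,
      ← withDensity_mul _ (measurable_gaussianPDF _ _) (hfmeas i)]
    congr 1
    ext t
    simp only [Pi.mul_apply, gaussianPDF, hf]
    rw [← ENNReal.ofReal_mul (gaussianPDFReal_nonneg _ _ _)]
    exact congrArg _ (hratio i t)
  set F : (Fin p → ℝ) → ℝ≥0∞ := fun x => ∏ i, f i (x i) with hF
  have hFmeas : Measurable F :=
    Finset.measurable_prod _ fun i _ => (hfmeas i).comp (measurable_pi_apply i)
  -- product withDensity representation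
  have hpi : (Measure.pi fun i => gaussianReal (v i) ((σ^2).toNNReal))
      = (Measure.pi fun i => gaussianReal (v' i) ((σ^2).toNNReal)).withDensity F := by
    refine Measure.pi_eq fun s hs => ?_
    rw [withDensity_apply _ (MeasurableSet.univ_pi hs), ← lintegral_indicator (MeasurableSet.univ_pi hs)]
    have hind : ∀ x : Fin p → ℝ, (Set.pi Set.univ s).indicator F x
        = ∏ i, (s i).indicator (f i) (x i) := by
      intro x
      by_cases hx : x ∈ Set.pi Set.univ s
      · rw [Set.indicator_of_mem hx]
        exact Finset.prod_congr rfl fun i _ =>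
          (Set.indicator_of_mem (hx i (Set.mem_univ i)) _).symm
      · rw [Set.indicator_of_notMem hx]
        simp only [Set.mem_pi, Set.mem_univ, forall_true_left, not_forall] at hx
        obtain ⟨i, hi⟩ := hx
        exact (Finset.prod_eq_zero (Finset.mem_univ i) (Set.indicator_of_notMem hi _)).symm
    rw [lintegral_congr hind,
      lintegral_pi_prod _ (fun i => inferInstance) _ (fun i => (hfmeas i).indicator (hs i))]
    refine Finset.prod_congr rfl fun i _ => ?_
    rw [lintegral_indicator (hs i), hwd i, withDensity_apply _ (hs i)]
  have hac : (Measure.pi fun i => gaussianReal (v i) ((σ^2).toNNReal))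
      ≪ (Measure.pi fun i => gaussianReal (v' i) ((σ^2).toNNReal)) := by
    rw [hpi]; exact withDensity_absolutelyContinuous _ _
  refine ⟨hac, fun lam hlam => ?_⟩
  have h_rn : (Measure.pi fun i => gaussianReal (v i) ((σ^2).toNNReal)).rnDeriv
      (Measure.pi fun i => gaussianReal (v' i) ((σ^2).toNNReal))
      =ᵐ[Measure.pi fun i => gaussianReal (v' i) ((σ^2).toNNReal)] F := by
    rw [hpi]; exact Measure.rnDeriv_withDensity _ hFmeas
  have h_rn' := h_rn.filter_mono hac.ae_le
  set κ : ℝ := lam + 1 with hκ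
  set h : Fin p → ℝ → ℝ≥0∞ := fun i t => ENNReal.ofReal (rexp (g i t * κ)) with hh
  have hhmeas : ∀ i, Measurable (h i) := by intro i; simp only [hh, hg]; fun_prop
  calc ∫⁻ x, ((Measure.pi fun i => gaussianReal (v i) ((σ^2).toNNReal)).rnDeriv
          (Measure.pi fun i => gaussianReal (v' i) ((σ^2).toNNReal)) x) ^ lam
        ∂(Measure.pi fun i => gaussianReal (v i) ((σ^2).toNNReal))
      = ∫⁻ x, F x ^ lam ∂(Measure.pi fun i => gaussianReal (v i) ((σ^2).toNNReal)) :=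
        lintegral_congr_ae (h_rn'.mono fun x hx => by dsimp only; rw [hx])
    _ = ∫⁻ x, (F * fun x => F x ^ lam) x
          ∂(Measure.pi fun i => gaussianReal (v' i) ((σ^2).toNNReal)) := by
        have hFlam : Measurable fun x => F x ^ lam :=
          ENNReal.continuous_rpow_const.measurable.comp hFmeas
        rw [hpi, lintegral_withDensity_eq_lintegral_mul _ hFmeas hFlam]
    _ = ∫⁻ x, ∏ i, h i (x i)
          ∂(Measure.pi fun i => gaussianReal (v' i) ((σ^2).toNNReal)) := by
        refine lintegral_congr fun x => ?_
        have h1 : F x = ENNReal.ofReal (rexp (∑ i, g i (x i))) := by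
          rw [Real.exp_sum, ENNReal.ofReal_prod_of_nonneg fun i _ => (Real.exp_pos _).le]
        have h2 : ∏ i, h i (x i) = ENNReal.ofReal (rexp ((∑ i, g i (x i)) * κ)) := by
          rw [Finset.sum_mul, Real.exp_sum,
            ENNReal.ofReal_prod_of_nonneg fun i _ => (Real.exp_pos _).le]
        simp only [Pi.mul_apply]
        rw [h1, h2, ENNReal.ofReal_rpow_of_pos (Real.exp_pos _), ← Real.exp_mul,
          ← ENNReal.ofReal_mul (Real.exp_pos _).le, ← Real.exp_add]
        congr 1
        rw [Real.exp_eq_exp, hκ]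
        ring
    _ = ∏ i, ∫⁻ t, h i t ∂gaussianReal (v' i) ((σ^2).toNNReal) :=
        lintegral_pi_prod _ (fun i => inferInstance) _ hhmeas
    _ = ∏ i, ENNReal.ofReal (rexp (κ*(κ-1)*(v i - v' i)^2/(2*σ^2))) :=
        Finset.prod_congr rfl fun i _ => gauss_moment_one (v i) (v' i) σ hσ κ
    _ = ENNReal.ofReal (rexp (lam * (lam + 1) * (∑ i, (v i - v' i)^2) / (2*σ^2))) := by
        rw [← ENNReal.ofReal_prod_of_nonneg fun i _ => (Real.exp_pos _).le, ← Real.exp_sum]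
        congr 1
        rw [Real.exp_eq_exp, ← Finset.sum_div, ← Finset.mul_sum, hκ]
        ring
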